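/- arXiv:1106.4946 — 3 statements merged into one kernel-verified Lean document; each statement's English description precedes it below -/
import Mathlib

section
/- For all functions G₁, G₂ from pairs of finite subsets of ℝ^d to ℝ and every pair (γ⁺,γ⁻) of finite subsets of ℝ^d, the K-transform of the ⋆-convolution is the pointwise product of the K-transforms: (𝕂(G₁⋆G₂))(γ⁺,γ⁻) = (𝕂G₁)(γ⁺,γ⁻) · (𝕂G₂)(γ⁺,γ⁻). -/
open MeasureTheory Finset ENNReal

noncomputable section

/-- Finite configurations over `ℝ^d`. -/
abbrev Cfg (d : ℕ) := Finset (Fin d → ℝ)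

/-- Two-component `K`-transform. -/
def Ktr {d : ℕ} (G : Cfg d → Cfg d → ℝ) (γp γm : Cfg d) : ℝ :=
  ∑ ηp ∈ γp.powerset, ∑ ηm ∈ γm.powerset, G ηp ηm

/-- Two-component inverse `K`-transform. -/
def Kinv {d : ℕ} (F : Cfg d → Cfg d → ℝ) (ηp ηm : Cfg d) : ℝ :=
  ∑ ξp ∈ ηp.powerset, ∑ ξm ∈ ηm.powerset,
    (-1 : ℝ) ^ ((ηp \ ξp).card + (ηm \ ξm).card) * F ξp ξm

/-- The `⋆`-convolution. -/
def starConv {d : ℕ} (G₁ G₂ : Cfg d → Cfg d → ℝ) (ηp ηm : Cfg d) : ℝ :=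
  ∑ ξp ∈ ηp.powerset, ∑ ξm ∈ ηm.powerset, G₁ ξp ξm *
    ∑ ζp ∈ ξp.powerset, ∑ ζm ∈ ξm.powerset, G₂ ((ηp \ ξp) ∪ ζp) ((ηm \ ξm) ∪ ζm)

/-- The configuration `{x₁,…,xₙ}` associated with a tuple `(x₁,…,xₙ)`. -/
def toCfg {d n : ℕ} (x : Fin n → Fin d → ℝ) : Cfg d := Finset.image x Finset.univ

/-- Two-component Lebesgue–Poisson integral, real-valued version. -/
def lpInt2 {d : ℕ} (F : Cfg d → Cfg d → ℝ) : ℝ :=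
  ∑' (n : ℕ) (m : ℕ), (1 / ((Nat.factorial n : ℝ) * (Nat.factorial m : ℝ))) *
    ∫ x : Fin n → Fin d → ℝ, ∫ y : Fin m → Fin d → ℝ, F (toCfg x) (toCfg y)

/-- Two-component Lebesgue–Poisson integral, `ℝ≥0∞`-valued version. -/
def lpInt2nn {d : ℕ} (F : Cfg d → Cfg d → ℝ≥0∞) : ℝ≥0∞ :=
  ∑' (n : ℕ) (m : ℕ), ((Nat.factorial n * Nat.factorial m : ℕ) : ℝ≥0∞)⁻¹ *
    ∫⁻ x : Fin n → Fin d → ℝ, ∫⁻ y : Fin m → Fin d → ℝ, F (toCfg x) (toCfg y)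

/-- `L_C`-norm of a real-valued function on two-component finite configurations. -/
def normLC {d : ℕ} (C : ℝ) (F : Cfg d → Cfg d → ℝ) : ℝ≥0∞ :=
  lpInt2nn (fun ηp ηm => ENNReal.ofReal (|F ηp ηm| * C ^ (ηp.card + ηm.card)))

/-- `L_C`-norm of an `ℝ≥0∞`-valued function on two-component finite configurations. -/
def normLCnn {d : ℕ} (C : ℝ) (F : Cfg d → Cfg d → ℝ≥0∞) : ℝ≥0∞ :=
  lpInt2nn (fun ηp ηm => F ηp ηm * ENNReal.ofReal (C ^ (ηp.card + ηm.card)))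

/-- Inverse `K`-transform of a shifted one-point rate, e.g. `D±`, `B±`, `A±`. -/
def kerK {d : ℕ} (r : (Fin d → ℝ) → Cfg d → Cfg d → ℝ)
    (x : Fin d → ℝ) (ξp ξm ηp ηm : Cfg d) : ℝ :=
  ∑ ζp ∈ ηp.powerset, ∑ ζm ∈ ηm.powerset,
    (-1 : ℝ) ^ ((ηp \ ζp).card + (ηm \ ζm).card) * r x (ζp ∪ ξp) (ζm ∪ ξm)

/-- Inverse `K`-transform of a shifted two-point rate, e.g. `C₁±`, `C₂±`. -/
def kerK2 {d : ℕ} (c : (Fin d → ℝ) → (Fin d → ℝ) → Cfg d → Cfg d → ℝ)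
    (x y : Fin d → ℝ) (ξp ξm ηp ηm : Cfg d) : ℝ :=
  ∑ ζp ∈ ηp.powerset, ∑ ζm ∈ ηm.powerset,
    (-1 : ℝ) ^ ((ηp \ ζp).card + (ηm \ ζm).card) * c x y (ζp ∪ ξp) (ζm ∪ ξm)

/-- A function of pairs of finite configurations has bounded support. -/
def BddSupp {d : ℕ} (G : Cfg d → Cfg d → ℝ) : Prop :=
  ∃ (Λ : Set (Fin d → ℝ)) (N : ℕ), IsCompact Λ ∧
    ∀ ηp ηm : Cfg d,
      ¬((↑ηp : Set (Fin d → ℝ)) ⊆ Λ ∧ (↑ηm : Set (Fin d → ℝ)) ⊆ Λ ∧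
        ηp.card ≤ N ∧ ηm.card ≤ N) → G ηp ηm = 0

/-- A function of pairs of finite configurations is bounded. -/
def Bdd {d : ℕ} (G : Cfg d → Cfg d → ℝ) : Prop :=
  ∃ Cb : ℝ, ∀ ηp ηm : Cfg d, |G ηp ηm| ≤ Cb

/-- Two-component birth-and-death generator. -/
def LBD {d : ℕ} (dp dm bp bm : (Fin d → ℝ) → Cfg d → Cfg d → ℝ)
    (F : Cfg d → Cfg d → ℝ) (γp γm : Cfg d) : ℝ :=
  (∑ x ∈ γp, dp x (γp.erase x) γm * (F (γp.erase x) γm - F γp γm))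
  + (∫ x, bp x γp γm * (F (insert x γp) γm - F γp γm))
  + (∑ y ∈ γm, dm y γp (γm.erase y) * (F γp (γm.erase y) - F γp γm))
  + (∫ y, bm y γp γm * (F γp (insert y γm) - F γp γm))

/-- Hierarchical birth-and-death operator `L̂`. -/
def hatLBD {d : ℕ} (dp dm bp bm : (Fin d → ℝ) → Cfg d → Cfg d → ℝ)
    (G : Cfg d → Cfg d → ℝ) (ηp ηm : Cfg d) : ℝ :=
  -(∑ ξp ∈ ηp.powerset, ∑ ξm ∈ ηm.powerset, G ξp ξm *
      ((∑ x ∈ ξp, kerK dp x (ξp.erase x) ξm (ηp \ ξp) (ηm \ ξm))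
       + ∑ y ∈ ξm, kerK dm y ξp (ξm.erase y) (ηp \ ξp) (ηm \ ξm)))
  + ∑ ξp ∈ ηp.powerset, ∑ ξm ∈ ηm.powerset,
      ((∫ x, G (insert x ξp) ξm * kerK bp x ξp ξm (ηp \ ξp) (ηm \ ξm))
       + ∫ y, G ξp (insert y ξm) * kerK bm y ξp ξm (ηp \ ξp) (ηm \ ξm))

/-- Adjoint birth-and-death operator `L̂*`. -/
def hatLBDstar {d : ℕ} (dp dm bp bm : (Fin d → ℝ) → Cfg d → Cfg d → ℝ)
    (k : Cfg d → Cfg d → ℝ) (ηp ηm : Cfg d) : ℝ :=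
  -(∑ x ∈ ηp, lpInt2 (fun ξp ξm =>
      k (ηp ∪ ξp) (ηm ∪ ξm) * kerK dp x (ηp.erase x) ηm ξp ξm))
  + (∑ x ∈ ηp, lpInt2 (fun ξp ξm =>
      k ((ηp.erase x) ∪ ξp) (ηm ∪ ξm) * kerK bp x (ηp.erase x) ηm ξp ξm))
  - (∑ y ∈ ηm, lpInt2 (fun ξp ξm =>
      k (ηp ∪ ξp) (ηm ∪ ξm) * kerK dm y ηp (ηm.erase y) ξp ξm))
  + (∑ y ∈ ηm, lpInt2 (fun ξp ξm =>
      k (ηp ∪ ξp) ((ηm.erase y) ∪ ξm) * kerK bm y ηp (ηm.erase y) ξp ξm))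

/-- Mark-preserving hopping generator `L₁`. -/
def Lhop1 {d : ℕ} (c1p c1m : (Fin d → ℝ) → (Fin d → ℝ) → Cfg d → Cfg d → ℝ)
    (F : Cfg d → Cfg d → ℝ) (γp γm : Cfg d) : ℝ :=
  (∑ x ∈ γp, ∫ x', c1p x x' (γp.erase x) γm *
      (F (insert x' (γp.erase x)) γm - F γp γm))
  + (∑ y ∈ γm, ∫ y', c1m y y' γp (γm.erase y) *
      (F γp (insert y' (γm.erase y)) - F γp γm))

/-- Mark-flipping hopping generator `L₂`. -/
def Lhop2 {d : ℕ} (c2p c2m : (Fin d → ℝ) → (Fin d → ℝ) → Cfg d → Cfg d → ℝ)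
    (F : Cfg d → Cfg d → ℝ) (γp γm : Cfg d) : ℝ :=
  (∑ x ∈ γp, ∫ y, c2p x y (γp.erase x) γm *
      (F (γp.erase x) (insert y γm) - F γp γm))
  + (∑ y ∈ γm, ∫ x, c2m x y γp (γm.erase y) *
      (F (insert x γp) (γm.erase y) - F γp γm))

/-- Hierarchical mark-preserving hopping operator `L̂₁`. -/
def hatL1 {d : ℕ} (c1p c1m : (Fin d → ℝ) → (Fin d → ℝ) → Cfg d → Cfg d → ℝ)
    (G : Cfg d → Cfg d → ℝ) (ηp ηm : Cfg d) : ℝ :=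
  (∑ ξp ∈ ηp.powerset, ∑ ξm ∈ ηm.powerset, ∑ x ∈ ξp, ∫ x',
      (G (insert x' (ξp.erase x)) ξm - G ξp ξm) *
        kerK2 c1p x x' (ξp.erase x) ξm (ηp \ ξp) (ηm \ ξm))
  + (∑ ξp ∈ ηp.powerset, ∑ ξm ∈ ηm.powerset, ∑ y ∈ ξm, ∫ y',
      (G ξp (insert y' (ξm.erase y)) - G ξp ξm) *
        kerK2 c1m y y' ξp (ξm.erase y) (ηp \ ξp) (ηm \ ξm))

/-- Hierarchical mark-flipping hopping operator `L̂₂`. -/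
def hatL2 {d : ℕ} (c2p c2m : (Fin d → ℝ) → (Fin d → ℝ) → Cfg d → Cfg d → ℝ)
    (G : Cfg d → Cfg d → ℝ) (ηp ηm : Cfg d) : ℝ :=
  (∑ ξp ∈ ηp.powerset, ∑ ξm ∈ ηm.powerset, ∑ x ∈ ξp, ∫ y,
      (G (ξp.erase x) (insert y ξm) - G ξp ξm) *
        kerK2 c2p x y (ξp.erase x) ξm (ηp \ ξp) (ηm \ ξm))
  + (∑ ξp ∈ ηp.powerset, ∑ ξm ∈ ηm.powerset, ∑ y ∈ ξm, ∫ x,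
      (G (insert x ξp) (ξm.erase y) - G ξp ξm) *
        kerK2 c2m x y ξp (ξm.erase y) (ηp \ ξp) (ηm \ ξm))

/-- Adjoint mark-preserving hopping operator `L̂₁*`. -/
def hatL1star {d : ℕ} (c1p c1m : (Fin d → ℝ) → (Fin d → ℝ) → Cfg d → Cfg d → ℝ)
    (k : Cfg d → Cfg d → ℝ) (ηp ηm : Cfg d) : ℝ :=
  (∑ x ∈ ηp, lpInt2 (fun ξp ξm => ∫ x',
      k ((ξp ∪ ηp ∪ {x'}).erase x) (ξm ∪ ηm) * kerK2 c1p x' x (ηp.erase x) ηm ξp ξm))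
  - (∑ x ∈ ηp, lpInt2 (fun ξp ξm =>
      k (ξp ∪ ηp) (ξm ∪ ηm) * ∫ x', kerK2 c1p x x' (ηp.erase x) ηm ξp ξm))
  + (∑ y ∈ ηm, lpInt2 (fun ξp ξm => ∫ y',
      k (ξp ∪ ηp) ((ξm ∪ ηm ∪ {y'}).erase y) * kerK2 c1m y' y ηp (ηm.erase y) ξp ξm))
  - (∑ y ∈ ηm, lpInt2 (fun ξp ξm =>
      k (ξp ∪ ηp) (ξm ∪ ηm) * ∫ y', kerK2 c1m y y' ηp (ηm.erase y) ξp ξm))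

/-- Adjoint mark-flipping hopping operator `L̂₂*`. -/
def hatL2star {d : ℕ} (c2p c2m : (Fin d → ℝ) → (Fin d → ℝ) → Cfg d → Cfg d → ℝ)
    (k : Cfg d → Cfg d → ℝ) (ηp ηm : Cfg d) : ℝ :=
  (∑ y ∈ ηm, lpInt2 (fun ξp ξm => ∫ x,
      k (ξp ∪ ηp ∪ {x}) ((ξm ∪ ηm).erase y) * kerK2 c2p x y ηp (ηm.erase y) ξp ξm))
  - (∑ x ∈ ηp, lpInt2 (fun ξp ξm =>
      k (ξp ∪ ηp) (ξm ∪ ηm) * ∫ y, kerK2 c2p x y (ηp.erase x) ηm ξp ξm))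
  + (∑ x ∈ ηp, lpInt2 (fun ξp ξm => ∫ y,
      k ((ξp ∪ ηp).erase x) (ξm ∪ ηm ∪ {y}) * kerK2 c2m x y (ηp.erase x) ηm ξp ξm))
  - (∑ y ∈ ηm, lpInt2 (fun ξp ξm =>
      k (ξp ∪ ηp) (ξm ∪ ηm) * ∫ x, kerK2 c2m x y ηp (ηm.erase y) ξp ξm))

/-- Flipping generator `L₀`. -/
def Lflip {d : ℕ} (ap am : (Fin d → ℝ) → Cfg d → Cfg d → ℝ)
    (F : Cfg d → Cfg d → ℝ) (γp γm : Cfg d) : ℝ :=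
  (∑ x ∈ γp, ap x (γp.erase x) γm * (F (γp.erase x) (insert x γm) - F γp γm))
  + (∑ y ∈ γm, am y γp (γm.erase y) * (F (insert y γp) (γm.erase y) - F γp γm))

lemma u1 {A : Type*} [DecidableEq A] {η ξ ζ : Finset A} (hξ : ξ ⊆ η) (hζ : ζ ⊆ ξ) :
    ξ ∪ ((η \ ξ) ∪ ζ) = η := by
  ext a; have h1 := @hξ a; have h2 := @hζ a; simp only [Finset.mem_union, Finset.mem_sdiff]; tauto

lemma u2 {A : Type*} [DecidableEq A] {η ξ ζ : Finset A} (hζ : ζ ⊆ ξ) :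
    ξ ∩ ((η \ ξ) ∪ ζ) = ζ := by
  ext a; have h2 := @hζ a
  simp only [Finset.mem_inter, Finset.mem_union, Finset.mem_sdiff]; tauto

lemma u3 {A : Type*} [DecidableEq A] (α β : Finset A) :
    ((α ∪ β) \ α) ∪ (α ∩ β) = β := by
  ext a; simp only [Finset.mem_union, Finset.mem_sdiff, Finset.mem_inter]; tauto

lemma key {A : Type*} [DecidableEq A] {M : Type*} [AddCommMonoid M] (γ : Finset A)
    (f : Finset A → Finset A → Finset A → M) :
    ∑ η ∈ γ.powerset, ∑ ξ ∈ η.powerset, ∑ ζ ∈ ξ.powerset, f η ξ ζ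
      = ∑ α ∈ γ.powerset, ∑ β ∈ γ.powerset, f (α ∪ β) α (α ∩ β) := by
  simp only [Finset.sum_sigma']
  refine Finset.sum_bij' (fun x _ => ⟨x.2.1, (x.1 \ x.2.1) ∪ x.2.2⟩)
    (fun y _ => ⟨y.1 ∪ y.2, y.1, y.1 ∩ y.2⟩) ?_ ?_ ?_ ?_ ?_
  · rintro ⟨η, ξ, ζ⟩ h
    simp only [Finset.mem_sigma, Finset.mem_powerset] at h ⊢
    obtain ⟨hη, hξ, hζ⟩ := h
    exact ⟨hξ.trans hη, Finset.union_subset ((Finset.sdiff_subset).trans hη)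
      ((hζ.trans hξ).trans hη)⟩
  · rintro ⟨α, β⟩ h
    simp only [Finset.mem_sigma, Finset.mem_powerset] at h ⊢
    exact ⟨Finset.union_subset h.1 h.2, Finset.subset_union_left, Finset.inter_subset_left⟩
  · rintro ⟨η, ξ, ζ⟩ h
    simp only [Finset.mem_sigma, Finset.mem_powerset] at h
    obtain ⟨hη, hξ, hζ⟩ := h
    simp [u1 hξ hζ, u2 hζ]
  · rintro ⟨α, β⟩ h
    simp [u3 α β]
  · rintro ⟨η, ξ, ζ⟩ h
    simp only [Finset.mem_sigma, Finset.mem_powerset] at h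
    obtain ⟨hη, hξ, hζ⟩ := h
    rw [u1 hξ hζ, u2 hζ]

/-- the `𝕂`-transform maps the `⋆`-convolution to the pointwise product. -/
theorem Ktr_starConv {d : ℕ} (G₁ G₂ : Cfg d → Cfg d → ℝ) (γp γm : Cfg d) :
    Ktr (starConv G₁ G₂) γp γm = Ktr G₁ γp γm * Ktr G₂ γp γm := by
  unfold Ktr starConv
  conv_lhs => simp only [Finset.mul_sum]
  conv_rhs => simp only [Finset.sum_mul_sum]
  have hre :
      ∑ ηp ∈ γp.powerset, ∑ ηm ∈ γm.powerset, ∑ ξp ∈ ηp.powerset, ∑ ξm ∈ ηm.powerset,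
        ∑ ζp ∈ ξp.powerset, ∑ ζm ∈ ξm.powerset,
          G₁ ξp ξm * G₂ ((ηp \ ξp) ∪ ζp) ((ηm \ ξm) ∪ ζm)
      = ∑ ηp ∈ γp.powerset, ∑ ξp ∈ ηp.powerset, ∑ ζp ∈ ξp.powerset,
          ∑ ηm ∈ γm.powerset, ∑ ξm ∈ ηm.powerset, ∑ ζm ∈ ξm.powerset,
            G₁ ξp ξm * G₂ ((ηp \ ξp) ∪ ζp) ((ηm \ ξm) ∪ ζm) := by
    refine Finset.sum_congr rfl fun ηp _ => ?_
    conv_lhs => rw [Finset.sum_comm]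
    refine Finset.sum_congr rfl fun ξp _ => ?_
    calc ∑ ηm ∈ γm.powerset, ∑ ξm ∈ ηm.powerset, ∑ ζp ∈ ξp.powerset, ∑ ζm ∈ ξm.powerset,
            G₁ ξp ξm * G₂ ((ηp \ ξp) ∪ ζp) ((ηm \ ξm) ∪ ζm)
        = ∑ ηm ∈ γm.powerset, ∑ ζp ∈ ξp.powerset, ∑ ξm ∈ ηm.powerset, ∑ ζm ∈ ξm.powerset,
            G₁ ξp ξm * G₂ ((ηp \ ξp) ∪ ζp) ((ηm \ ξm) ∪ ζm) :=
          Finset.sum_congr rfl fun ηm _ => Finset.sum_comm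
      _ = _ := Finset.sum_comm
  rw [hre, key γp]
  refine Finset.sum_congr rfl fun αp _ => Finset.sum_congr rfl fun βp _ => ?_
  rw [key γm]
  simp only [u3]
end
end

section
/- (Minlos-type integration lemma for the two-component Lebesgue–Poisson measure.) Let H be a map assigning to two pairs of finite subsets of ℝ^d a value in [0,∞], such that for all n, m, k, l ∈ ℕ the induced maps on tuples ((x_i), (y_j), (u_p), (v_q)) ↦ H({x₁,…,x_n}, {y₁,…,y_m}, {u₁,…,u_k}, {v₁,…,v_l}) are Borel measurable. Then, with values in [0,∞], ∑_{n,m≥0} (1/(n!·m!)) ∫_{(ℝ^d)^n}∫_{(ℝ^d)^m} ∑_{S⊆{1,…,n}} ∑_{T⊆{1,…,m}} H({x₁,…,x_n}, {y₁,…,y_m}, {x_i : i∈S}, {y_j : j∈T}) dy dx = ∑_{n,m,k,l≥0} (1/(n!·m!·k!·l!)) ∫_{(ℝ^d)^n}∫_{(ℝ^d)^m}∫_{(ℝ^d)^k}∫_{(ℝ^d)^l} H({x₁,…,x_n}∪{u₁,…,u_k}, {y₁,…,y_m}∪{v₁,…,v_l}, {u₁,…,u_k}, {v₁,…,v_l})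 dv du dy dx, all integrals being with respect to Lebesgue measure. -/
open MeasureTheory Finset ENNReal

noncomputable section

section MinlosHelpers

lemma toCfg_append {d k l : ℕ} (a : Fin k → Fin d → ℝ) (b : Fin l → Fin d → ℝ) :
    toCfg (Fin.append a b) = toCfg a ∪ toCfg b := by
  ext z
  simp only [toCfg, Finset.mem_union, Finset.mem_image, Finset.mem_univ, true_and]
  constructor
  · rintro ⟨i, rfl⟩
    induction i using Fin.addCases with
    | left j => exact Or.inl ⟨j, (Fin.append_left a b j).symm⟩
    | right j => exact Or.inr ⟨j, (Fin.append_right a b j).symm⟩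
  · rintro (⟨j, rfl⟩ | ⟨j, rfl⟩)
    · exact ⟨Fin.castAdd l j, Fin.append_left a b j⟩
    · exact ⟨Fin.natAdd k j, Fin.append_right a b j⟩

lemma measurable_append {d k l : ℕ} :
    Measurable (fun p : (Fin k → Fin d → ℝ) × (Fin l → Fin d → ℝ) => Fin.append p.1 p.2) := by
  apply measurable_pi_lambda
  intro i
  induction i using Fin.addCases with
  | left j =>
      simp only [Fin.append_left]
      exact (measurable_pi_apply j).comp measurable_fst
  | right j =>
      simp only [Fin.append_right]
      exact (measurable_pi_apply j).comp measurable_snd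

lemma image_eq_toCfg {d m : ℕ} (T : Finset (Fin m)) (y : Fin m → Fin d → ℝ) :
    T.image y = toCfg (fun j : Fin T.card => y ((T.orderIsoOfFin rfl j : ↥T) : Fin m)) := by
  ext z
  simp only [toCfg, Finset.mem_image, Finset.mem_univ, true_and]
  constructor
  · rintro ⟨i, hi, rfl⟩
    exact ⟨(T.orderIsoOfFin rfl).symm ⟨i, hi⟩, by simp⟩
  · rintro ⟨j, rfl⟩
    exact ⟨_, (T.orderIsoOfFin rfl j).2, rfl⟩

lemma tsum_range_succ_reindex (g : ℕ → ℕ → ℝ≥0∞) :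
    ∑' n : ℕ, ∑ k ∈ Finset.range (n + 1), g (n - k) k = ∑' n : ℕ, ∑' k : ℕ, g n k := by
  calc ∑' n : ℕ, ∑ k ∈ Finset.range (n + 1), g (n - k) k
      = ∑' n : ℕ, ∑ p ∈ Finset.HasAntidiagonal.antidiagonal n, g p.2 p.1 := by
        refine tsum_congr fun n => ?_
        rw [Finset.Nat.sum_antidiagonal_eq_sum_range_succ_mk]
    _ = ∑' n : ℕ, ∑' p : {p : ℕ × ℕ // p ∈ Finset.HasAntidiagonal.antidiagonal n}, g p.1.2 p.1.1 := by
        refine tsum_congr fun n => (Finset.tsum_subtype _ _).symm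
    _ = ∑' q : (Σ n : ℕ, {p : ℕ × ℕ // p ∈ Finset.HasAntidiagonal.antidiagonal n}), g q.2.1.2 q.2.1.1 :=
        (ENNReal.tsum_sigma _).symm
    _ = ∑' p : ℕ × ℕ, g p.2 p.1 :=
        Finset.HasAntidiagonal.sigmaAntidiagonalEquivProd.tsum_eq (fun p : ℕ × ℕ => g p.2 p.1)
    _ = ∑' n : ℕ, ∑' k : ℕ, g n k := by rw [ENNReal.tsum_prod']; exact ENNReal.tsum_comm

lemma fact_inv_mul (n k : ℕ) (h : k ≤ n) :
    ((n.factorial : ℝ≥0∞))⁻¹ * (n.choose k : ℝ≥0∞)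
      = (((n - k).factorial * k.factorial : ℕ) : ℝ≥0∞)⁻¹ := by
  have key : ((n.choose k : ℝ≥0∞)) * (((n - k).factorial * k.factorial : ℕ) : ℝ≥0∞)
      = (n.factorial : ℝ≥0∞) := by
    rw [← Nat.cast_mul]
    norm_cast
    rw [← Nat.choose_mul_factorial_mul_factorial h]; ring
  have hB0 : (((n - k).factorial * k.factorial : ℕ) : ℝ≥0∞) ≠ 0 := by
    exact_mod_cast Nat.mul_ne_zero (Nat.factorial_ne_zero _) (Nat.factorial_ne_zero _)
  have hBtop : (((n - k).factorial * k.factorial : ℕ) : ℝ≥0∞) ≠ ⊤ := ENNReal.natCast_ne_top _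
  have hA0 : ((n.factorial : ℕ) : ℝ≥0∞) ≠ 0 := by exact_mod_cast Nat.factorial_ne_zero n
  have hAtop : ((n.factorial : ℕ) : ℝ≥0∞) ≠ ⊤ := ENNReal.natCast_ne_top _
  calc ((n.factorial : ℝ≥0∞))⁻¹ * (n.choose k : ℝ≥0∞)
      = ((n.factorial : ℝ≥0∞))⁻¹ * ((n.choose k : ℝ≥0∞) *
          (((n - k).factorial * k.factorial : ℕ) : ℝ≥0∞)) *
          ((((n - k).factorial * k.factorial : ℕ) : ℝ≥0∞))⁻¹ := by
        rw [mul_assoc, mul_assoc, ENNReal.mul_inv_cancel hB0 hBtop, mul_one]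
    _ = (((n - k).factorial * k.factorial : ℕ) : ℝ≥0∞)⁻¹ := by
        rw [key, ENNReal.inv_mul_cancel hA0 hAtop, one_mul]

lemma inv_natCast_mul (a b : ℕ) (ha : a ≠ 0) :
    ((a * b : ℕ) : ℝ≥0∞)⁻¹ = (a : ℝ≥0∞)⁻¹ * (b : ℝ≥0∞)⁻¹ := by
  push_cast
  rw [ENNReal.mul_inv (Or.inl (by exact_mod_cast ha)) (Or.inl (ENNReal.natCast_ne_top a))]

lemma split_one {d m : ℕ} (T : Finset (Fin m)) (f : Cfg d → Cfg d → ℝ≥0∞)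
    (hf : Measurable (fun p : (Fin (m - T.card) → Fin d → ℝ) × (Fin T.card → Fin d → ℝ) =>
      f (toCfg p.1 ∪ toCfg p.2) (toCfg p.2))) :
    ∫⁻ y : Fin m → Fin d → ℝ, f (toCfg y) (T.image y)
      = ∫⁻ y' : Fin (m - T.card) → Fin d → ℝ, ∫⁻ v : Fin T.card → Fin d → ℝ,
          f (toCfg y' ∪ toCfg v) (toCfg v) := by
  classical
  have hcc : Tᶜ.card = m - T.card := by simp [Finset.card_compl]
  let eT : Fin T.card ≃o ↥T := T.orderIsoOfFin rfl
  let eC0 : Fin (m - T.card) ≃o ↥(Tᶜ) := Tᶜ.orderIsoOfFin hcc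
  let eC : Fin (m - T.card) ≃ {i : Fin m // ¬ i ∈ T} :=
    eC0.toEquiv.trans (Equiv.subtypeEquivRight (fun i => by simp))
  let e : Fin T.card ⊕ Fin (m - T.card) ≃ Fin m :=
    (Equiv.sumCongr eT.toEquiv eC).trans (Equiv.sumCompl (· ∈ T))
  let Φ : ((Fin (m - T.card) → Fin d → ℝ) × (Fin T.card → Fin d → ℝ)) ≃ᵐ
      (Fin m → Fin d → ℝ) :=
    MeasurableEquiv.prodComm.trans
      ((MeasurableEquiv.sumPiEquivProdPi
          (fun _ : Fin T.card ⊕ Fin (m - T.card) => Fin d → ℝ)).symm.trans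
        (MeasurableEquiv.piCongrLeft (fun _ : Fin m => Fin d → ℝ) e))
  have h1 : MeasurePreserving (MeasurableEquiv.prodComm :
      ((Fin (m - T.card) → Fin d → ℝ) × (Fin T.card → Fin d → ℝ)) ≃ᵐ _) volume volume := by
    rw [Measure.volume_eq_prod, Measure.volume_eq_prod]
    exact Measure.measurePreserving_swap
  have h2 := volume_measurePreserving_sumPiEquivProdPi_symm
    (fun _ : Fin T.card ⊕ Fin (m - T.card) => Fin d → ℝ)
  have h3 := volume_measurePreserving_piCongrLeft (fun _ : Fin m => Fin d → ℝ) e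
  have hΦ : MeasurePreserving (⇑Φ) volume volume := (h3.comp h2).comp h1
  have key : ∀ (p : (Fin (m - T.card) → Fin d → ℝ) × (Fin T.card → Fin d → ℝ))
      (s : Fin T.card ⊕ Fin (m - T.card)), Φ p (e s) = Sum.elim p.2 p.1 s := by
    intro p s
    have h := Equiv.piCongrLeft_apply_apply (fun _ : Fin m => Fin d → ℝ) e
      ((MeasurableEquiv.sumPiEquivProdPi
        (fun _ : Fin T.card ⊕ Fin (m - T.card) => Fin d → ℝ)).symm (p.2, p.1)) s
    have hΦp : Φ p (e s) = (MeasurableEquiv.sumPiEquivProdPi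
        (fun _ : Fin T.card ⊕ Fin (m - T.card) => Fin d → ℝ)).symm (p.2, p.1) s := h
    rw [hΦp]
    cases s with
    | inl j => simp [MeasurableEquiv.sumPiEquivProdPi]
    | inr j => simp [MeasurableEquiv.sumPiEquivProdPi]
  have heinl : ∀ j : Fin T.card, e (Sum.inl j) = ((eT j : ↥T) : Fin m) := by
    intro j; simp [e]
  have hImage : ∀ p, T.image (Φ p) = toCfg p.2 := by
    intro p
    ext z
    simp only [toCfg, Finset.mem_image, Finset.mem_univ, true_and]
    constructor
    · rintro ⟨i, hi, rfl⟩
      refine ⟨eT.symm ⟨i, hi⟩, ?_⟩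
      have h1' : ((eT (eT.symm ⟨i, hi⟩) : ↥T) : Fin m) = i := by simp
      have := key p (Sum.inl (eT.symm ⟨i, hi⟩))
      rw [heinl, h1'] at this
      simp only [Sum.elim_inl] at this
      exact this.symm
    · rintro ⟨j, rfl⟩
      refine ⟨((eT j : ↥T) : Fin m), (eT j).2, ?_⟩
      have := key p (Sum.inl j)
      rw [heinl] at this
      simpa using this
  have hUnion : ∀ p, toCfg (Φ p) = toCfg p.1 ∪ toCfg p.2 := by
    intro p
    ext z
    simp only [toCfg, Finset.mem_union, Finset.mem_image, Finset.mem_univ, true_and]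
    constructor
    · rintro ⟨i, rfl⟩
      obtain ⟨s, rfl⟩ := e.surjective i
      have := key p s
      cases s with
      | inl j => exact Or.inr ⟨j, by simpa using this.symm⟩
      | inr j => exact Or.inl ⟨j, by simpa using this.symm⟩
    · rintro (⟨j, rfl⟩ | ⟨j, rfl⟩)
      · exact ⟨e (Sum.inr j), by simpa using (key p (Sum.inr j))⟩
      · exact ⟨e (Sum.inl j), by simpa using (key p (Sum.inl j))⟩
  calc ∫⁻ y : Fin m → Fin d → ℝ, f (toCfg y) (T.image y)
      = ∫⁻ y, f (toCfg y) (T.image y) ∂(Measure.map Φ volume) := by rw [hΦ.map_eq]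
    _ = ∫⁻ p, f (toCfg (Φ p)) (T.image (Φ p)) := lintegral_map_equiv _ Φ
    _ = ∫⁻ p : (Fin (m - T.card) → Fin d → ℝ) × (Fin T.card → Fin d → ℝ),
          f (toCfg p.1 ∪ toCfg p.2) (toCfg p.2) := by
        refine lintegral_congr fun p => ?_
        rw [hUnion p, hImage p]
    _ = ∫⁻ y' : Fin (m - T.card) → Fin d → ℝ, ∫⁻ v : Fin T.card → Fin d → ℝ,
          f (toCfg y' ∪ toCfg v) (toCfg v) := by
        rw [Measure.volume_eq_prod, lintegral_prod _ hf.aemeasurable]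

lemma meas_H4 {d : ℕ} {H : Cfg d → Cfg d → Cfg d → Cfg d → ℝ≥0∞}
    (hH : ∀ n m k l : ℕ, Measurable (fun p :
        (Fin n → Fin d → ℝ) × (Fin m → Fin d → ℝ) ×
          (Fin k → Fin d → ℝ) × (Fin l → Fin d → ℝ) =>
        H (toCfg p.1) (toCfg p.2.1) (toCfg p.2.2.1) (toCfg p.2.2.2)))
    {α : Type*} [MeasurableSpace α] {n m k l : ℕ}
    {f1 : α → Fin n → Fin d → ℝ} {f2 : α → Fin m → Fin d → ℝ}
    {f3 : α → Fin k → Fin d → ℝ} {f4 : α → Fin l → Fin d → ℝ}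
    (h1 : Measurable f1) (h2 : Measurable f2) (h3 : Measurable f3) (h4 : Measurable f4) :
    Measurable fun a => H (toCfg (f1 a)) (toCfg (f2 a)) (toCfg (f3 a)) (toCfg (f4 a)) :=
  (hH n m k l).comp (h1.prodMk (h2.prodMk (h3.prodMk h4)))

lemma sum_powerset_by_card {n : ℕ} (f : ℕ → ℝ≥0∞) :
    ∑ S ∈ (Finset.univ : Finset (Fin n)).powerset, f S.card
      = ∑ j ∈ Finset.range (n + 1), (n.choose j : ℝ≥0∞) * f j := by
  rw [Finset.sum_powerset]
  have hcard : (Finset.univ : Finset (Fin n)).card = n := by simp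
  rw [hcard]
  refine Finset.sum_congr rfl fun j _ => ?_
  have : ∀ S ∈ Finset.powersetCard j (Finset.univ : Finset (Fin n)), f S.card = f j := by
    intro S hS
    rw [(Finset.mem_powersetCard.mp hS).2]
  rw [Finset.sum_congr rfl this, Finset.sum_const, Finset.card_powersetCard, hcard,
    nsmul_eq_mul]

end MinlosHelpers

/-- Minlos-type integration lemma for the two-component
Lebesgue–Poisson measure. -/
theorem minlos_two_component {d : ℕ}
    (H : Cfg d → Cfg d → Cfg d → Cfg d → ℝ≥0∞)
    (hH : ∀ n m k l : ℕ, Measurable (fun p :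
        (Fin n → Fin d → ℝ) × (Fin m → Fin d → ℝ) ×
          (Fin k → Fin d → ℝ) × (Fin l → Fin d → ℝ) =>
        H (toCfg p.1) (toCfg p.2.1) (toCfg p.2.2.1) (toCfg p.2.2.2))) :
    (∑' (n : ℕ) (m : ℕ), ((Nat.factorial n * Nat.factorial m : ℕ) : ℝ≥0∞)⁻¹ *
      ∫⁻ x : Fin n → Fin d → ℝ, ∫⁻ y : Fin m → Fin d → ℝ,
        ∑ S ∈ (Finset.univ : Finset (Fin n)).powerset,
          ∑ T ∈ (Finset.univ : Finset (Fin m)).powerset,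
            H (toCfg x) (toCfg y) (S.image x) (T.image y))
    = ∑' (n : ℕ) (m : ℕ) (k : ℕ) (l : ℕ),
        ((Nat.factorial n * Nat.factorial m * Nat.factorial k * Nat.factorial l : ℕ) : ℝ≥0∞)⁻¹ *
        ∫⁻ x : Fin n → Fin d → ℝ, ∫⁻ y : Fin m → Fin d → ℝ,
        ∫⁻ u : Fin k → Fin d → ℝ, ∫⁻ v : Fin l → Fin d → ℝ,
          H (toCfg x ∪ toCfg u) (toCfg y ∪ toCfg v) (toCfg u) (toCfg v) := by
  classical
  set J : ℕ → ℕ → ℕ → ℕ → ℝ≥0∞ := fun a b k l =>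
    ∫⁻ x : Fin a → Fin d → ℝ, ∫⁻ y : Fin b → Fin d → ℝ,
    ∫⁻ u : Fin k → Fin d → ℝ, ∫⁻ v : Fin l → Fin d → ℝ,
      H (toCfg x ∪ toCfg u) (toCfg y ∪ toCfg v) (toCfg u) (toCfg v) with hJ
  -- Step A: per (n, m, S, T), split the integrals
  have stepA1 : ∀ (n m : ℕ) (S : Finset (Fin n)) (T : Finset (Fin m)),
      (∫⁻ x : Fin n → Fin d → ℝ, ∫⁻ y : Fin m → Fin d → ℝ,
        H (toCfg x) (toCfg y) (S.image x) (T.image y))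
      = J (n - S.card) (m - T.card) S.card T.card := by
    intro n m S T
    have base : Measurable fun r :
        (((Fin (n - S.card) → Fin d → ℝ) × (Fin S.card → Fin d → ℝ)) ×
          (Fin (m - T.card) → Fin d → ℝ)) × (Fin T.card → Fin d → ℝ) =>
        H (toCfg r.1.1.1 ∪ toCfg r.1.1.2) (toCfg r.1.2 ∪ toCfg r.2)
          (toCfg r.1.1.2) (toCfg r.2) := by
      simp only [← toCfg_append]
      exact meas_H4 hH
        (measurable_append.comp ((measurable_fst.fst.fst).prodMk measurable_fst.fst.snd))
        (measurable_append.comp ((measurable_fst.snd).prodMk measurable_snd))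
        measurable_fst.fst.snd measurable_snd
    calc ∫⁻ x : Fin n → Fin d → ℝ, ∫⁻ y : Fin m → Fin d → ℝ,
          H (toCfg x) (toCfg y) (S.image x) (T.image y)
        = ∫⁻ x : Fin n → Fin d → ℝ, ∫⁻ y' : Fin (m - T.card) → Fin d → ℝ,
            ∫⁻ v : Fin T.card → Fin d → ℝ,
              H (toCfg x) (toCfg y' ∪ toCfg v) (S.image x) (toCfg v) := by
          refine lintegral_congr fun x => ?_
          refine split_one T (fun β ζ => H (toCfg x) β (S.image x) ζ) ?_
          simp only [image_eq_toCfg, ← toCfg_append]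
          exact meas_H4 hH measurable_const
            (measurable_append.comp (measurable_fst.prodMk measurable_snd))
            measurable_const measurable_snd
      _ = ∫⁻ x' : Fin (n - S.card) → Fin d → ℝ, ∫⁻ u : Fin S.card → Fin d → ℝ,
            ∫⁻ y' : Fin (m - T.card) → Fin d → ℝ, ∫⁻ v : Fin T.card → Fin d → ℝ,
              H (toCfg x' ∪ toCfg u) (toCfg y' ∪ toCfg v) (toCfg u) (toCfg v) := by
          refine split_one S (fun α ξ => ∫⁻ y' : Fin (m - T.card) → Fin d → ℝ,
            ∫⁻ v : Fin T.card → Fin d → ℝ, H α (toCfg y' ∪ toCfg v) ξ (toCfg v)) ?_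
          exact (base.lintegral_prod_right').lintegral_prod_right'
      _ = J (n - S.card) (m - T.card) S.card T.card := by
          refine lintegral_congr fun x' => ?_
          refine lintegral_lintegral_swap ?_
          have base2 : Measurable fun r :
              ((Fin S.card → Fin d → ℝ) × (Fin (m - T.card) → Fin d → ℝ)) ×
                (Fin T.card → Fin d → ℝ) =>
              H (toCfg x' ∪ toCfg r.1.1) (toCfg r.1.2 ∪ toCfg r.2)
                (toCfg r.1.1) (toCfg r.2) := by
            simp only [← toCfg_append]
            exact meas_H4 hH
              (measurable_append.comp (measurable_const.prodMk measurable_fst.fst))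
              (measurable_append.comp (measurable_fst.snd.prodMk measurable_snd))
              measurable_fst.fst measurable_snd
          exact (base2.lintegral_prod_right').aemeasurable
  -- Step A + B: per (n, m), the full inner double integral
  have stepAB : ∀ n m : ℕ,
      (∫⁻ x : Fin n → Fin d → ℝ, ∫⁻ y : Fin m → Fin d → ℝ,
        ∑ S ∈ (Finset.univ : Finset (Fin n)).powerset,
          ∑ T ∈ (Finset.univ : Finset (Fin m)).powerset,
            H (toCfg x) (toCfg y) (S.image x) (T.image y))
      = ∑ j ∈ Finset.range (n + 1), (n.choose j : ℝ≥0∞) *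
          ∑ i ∈ Finset.range (m + 1), (m.choose i : ℝ≥0∞) * J (n - j) (m - i) j i := by
    intro n m
    have hST : ∀ (S : Finset (Fin n)) (T : Finset (Fin m)),
        Measurable (fun q : (Fin n → Fin d → ℝ) × (Fin m → Fin d → ℝ) =>
          H (toCfg q.1) (toCfg q.2) (S.image q.1) (T.image q.2)) := by
      intro S T
      simp only [image_eq_toCfg]
      exact meas_H4 hH measurable_fst measurable_snd
        (measurable_pi_lambda _ fun j => (measurable_pi_apply _).comp measurable_fst)
        (measurable_pi_lambda _ fun j => (measurable_pi_apply _).comp measurable_snd)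
    calc (∫⁻ x : Fin n → Fin d → ℝ, ∫⁻ y : Fin m → Fin d → ℝ,
          ∑ S ∈ (Finset.univ : Finset (Fin n)).powerset,
            ∑ T ∈ (Finset.univ : Finset (Fin m)).powerset,
              H (toCfg x) (toCfg y) (S.image x) (T.image y))
        = ∫⁻ x : Fin n → Fin d → ℝ,
            ∑ S ∈ (Finset.univ : Finset (Fin n)).powerset,
              ∑ T ∈ (Finset.univ : Finset (Fin m)).powerset,
                ∫⁻ y : Fin m → Fin d → ℝ,
                  H (toCfg x) (toCfg y) (S.image x) (T.image y) := by
          refine lintegral_congr fun x => ?_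
          rw [lintegral_finset_sum]
          · refine Finset.sum_congr rfl fun S _ => ?_
            rw [lintegral_finset_sum]
            intro T _
            exact (hST S T).comp (measurable_const.prodMk measurable_id)
          · intro S _
            exact Finset.measurable_sum _ fun T _ =>
              (hST S T).comp (measurable_const.prodMk measurable_id)
      _ = ∑ S ∈ (Finset.univ : Finset (Fin n)).powerset,
            ∑ T ∈ (Finset.univ : Finset (Fin m)).powerset,
              ∫⁻ x : Fin n → Fin d → ℝ, ∫⁻ y : Fin m → Fin d → ℝ,
                H (toCfg x) (toCfg y) (S.image x) (T.image y) := by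
          rw [lintegral_finset_sum]
          · refine Finset.sum_congr rfl fun S _ => ?_
            rw [lintegral_finset_sum]
            intro T _
            exact (hST S T).lintegral_prod_right'
          · intro S _
            exact Finset.measurable_sum _ fun T _ => (hST S T).lintegral_prod_right'
      _ = ∑ S ∈ (Finset.univ : Finset (Fin n)).powerset,
            ∑ T ∈ (Finset.univ : Finset (Fin m)).powerset,
              J (n - S.card) (m - T.card) S.card T.card := by
          exact Finset.sum_congr rfl fun S _ => Finset.sum_congr rfl fun T _ =>
            stepA1 n m S T
      _ = ∑ S ∈ (Finset.univ : Finset (Fin n)).powerset,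
            ∑ i ∈ Finset.range (m + 1), (m.choose i : ℝ≥0∞) *
              J (n - S.card) (m - i) S.card i := by
          exact Finset.sum_congr rfl fun S _ =>
            sum_powerset_by_card (fun i => J (n - S.card) (m - i) S.card i)
      _ = ∑ j ∈ Finset.range (n + 1), (n.choose j : ℝ≥0∞) *
            ∑ i ∈ Finset.range (m + 1), (m.choose i : ℝ≥0∞) * J (n - j) (m - i) j i :=
          sum_powerset_by_card (fun j => ∑ i ∈ Finset.range (m + 1),
            (m.choose i : ℝ≥0∞) * J (n - j) (m - i) j i)
  -- Step B': distribute the factorials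
  have stepB : ∀ n m : ℕ,
      ((Nat.factorial n * Nat.factorial m : ℕ) : ℝ≥0∞)⁻¹ *
        (∑ j ∈ Finset.range (n + 1), (n.choose j : ℝ≥0∞) *
          ∑ i ∈ Finset.range (m + 1), (m.choose i : ℝ≥0∞) * J (n - j) (m - i) j i)
      = ∑ j ∈ Finset.range (n + 1), ∑ i ∈ Finset.range (m + 1),
          (((n - j).factorial * j.factorial : ℕ) : ℝ≥0∞)⁻¹ *
            ((((m - i).factorial * i.factorial : ℕ) : ℝ≥0∞)⁻¹ * J (n - j) (m - i) j i) := by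
    intro n m
    rw [inv_natCast_mul _ _ (Nat.factorial_ne_zero n), Finset.mul_sum]
    refine Finset.sum_congr rfl fun j hj => ?_
    have hjn : j ≤ n := Nat.lt_succ_iff.mp (Finset.mem_range.mp hj)
    rw [Finset.mul_sum, Finset.mul_sum]
    refine Finset.sum_congr rfl fun i hi => ?_
    have him : i ≤ m := Nat.lt_succ_iff.mp (Finset.mem_range.mp hi)
    have h1 := fact_inv_mul n j hjn
    have h2 := fact_inv_mul m i him
    calc (Nat.factorial n : ℝ≥0∞)⁻¹ * (Nat.factorial m : ℝ≥0∞)⁻¹ *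
          ((n.choose j : ℝ≥0∞) * ((m.choose i : ℝ≥0∞) * J (n - j) (m - i) j i))
        = ((Nat.factorial n : ℝ≥0∞)⁻¹ * (n.choose j : ℝ≥0∞)) *
            (((Nat.factorial m : ℝ≥0∞)⁻¹ * (m.choose i : ℝ≥0∞)) * J (n - j) (m - i) j i) := by
          ring
      _ = (((n - j).factorial * j.factorial : ℕ) : ℝ≥0∞)⁻¹ *
            ((((m - i).factorial * i.factorial : ℕ) : ℝ≥0∞)⁻¹ * J (n - j) (m - i) j i) := by
          rw [h1, h2]
  -- put everything together
  set K : ℕ → ℕ → ℕ → ℕ → ℝ≥0∞ := fun a k b l =>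
    ((a.factorial * k.factorial : ℕ) : ℝ≥0∞)⁻¹ *
      (((b.factorial * l.factorial : ℕ) : ℝ≥0∞)⁻¹ * J a b k l) with hK
  calc (∑' (n : ℕ) (m : ℕ), ((Nat.factorial n * Nat.factorial m : ℕ) : ℝ≥0∞)⁻¹ *
        ∫⁻ x : Fin n → Fin d → ℝ, ∫⁻ y : Fin m → Fin d → ℝ,
          ∑ S ∈ (Finset.univ : Finset (Fin n)).powerset,
            ∑ T ∈ (Finset.univ : Finset (Fin m)).powerset,
              H (toCfg x) (toCfg y) (S.image x) (T.image y))
      = ∑' (n : ℕ) (m : ℕ), ∑ j ∈ Finset.range (n + 1), ∑ i ∈ Finset.range (m + 1),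
          K (n - j) j (m - i) i := by
        refine tsum_congr fun n => tsum_congr fun m => ?_
        rw [stepAB n m, stepB n m]
    _ = ∑' (n : ℕ), ∑ j ∈ Finset.range (n + 1), ∑' (b : ℕ) (l : ℕ), K (n - j) j b l := by
        refine tsum_congr fun n => ?_
        rw [Summable.tsum_finsetSum (fun j _ => ENNReal.summable)]
        refine Finset.sum_congr rfl fun j _ => ?_
        exact tsum_range_succ_reindex (fun b l => K (n - j) j b l)
    _ = ∑' (a : ℕ) (k : ℕ) (b : ℕ) (l : ℕ), K a k b l :=
        tsum_range_succ_reindex (fun a k => ∑' (b : ℕ) (l : ℕ), K a k b l)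
    _ = ∑' (a : ℕ) (b : ℕ) (k : ℕ) (l : ℕ), K a k b l := by
        refine tsum_congr fun a => ?_
        exact ENNReal.tsum_comm
    _ = ∑' (n : ℕ) (m : ℕ) (k : ℕ) (l : ℕ),
        ((Nat.factorial n * Nat.factorial m * Nat.factorial k * Nat.factorial l : ℕ) : ℝ≥0∞)⁻¹ *
        ∫⁻ x : Fin n → Fin d → ℝ, ∫⁻ y : Fin m → Fin d → ℝ,
        ∫⁻ u : Fin k → Fin d → ℝ, ∫⁻ v : Fin l → Fin d → ℝ,
          H (toCfg x ∪ toCfg u) (toCfg y ∪ toCfg v) (toCfg u) (toCfg v) := by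
        refine tsum_congr fun a => tsum_congr fun b => tsum_congr fun k =>
          tsum_congr fun l => ?_
        have hfac : (a.factorial * b.factorial * k.factorial * l.factorial : ℕ)
            = (a.factorial * k.factorial) * (b.factorial * l.factorial) := by ring
        rw [hK, hJ]
        simp only []
        rw [hfac, inv_natCast_mul _ _
          (Nat.mul_ne_zero (Nat.factorial_ne_zero _) (Nat.factorial_ne_zero _)), mul_assoc]
end
end

section
/- (Explicit form of the hierarchical operator for flipping dynamics.) For arbitrary rate functions a⁺, a⁻ mapping (x, η⁺, η⁻), x ∈ ℝ^d, (η⁺,η⁻) a pair of finite subsets of ℝ^d, to ℝ, for every function G of pairs of finite subsets of ℝ^d and every pair (η⁺,η⁻) of disjoint finite subsets: (𝕂⁻¹(L₀(𝕂G)))(η⁺,η⁻) = ∑_{ξ⁺⊆η⁺}∑_{ξ⁻⊆η⁻} ∑_{x∈ξ⁺} (G(ξ⁺∖{x}, ξ⁻∪{x}) − G(ξ⁺,ξ⁻)) · A⁺(x, ξ⁺∖{x}, ξ⁻, η⁺∖ξ⁺, η⁻∖ξ⁻) + ∑_{ξ⁺⊆η⁺}∑_{ξ⁻⊆η⁻}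 ∑_{y∈ξ⁻} (G(ξ⁺∪{y}, ξ⁻∖{y}) − G(ξ⁺,ξ⁻)) · A⁻(y, ξ⁺, ξ⁻∖{y}, η⁺∖ξ⁺, η⁻∖ξ⁻). -/
open MeasureTheory Finset ENNReal

noncomputable section

/-! ### Auxiliary lemmas for `hatL_flip` -/

section HlfAux

variable {α : Type*} [DecidableEq α]

lemma hlf_neg_one_pow_sum_powerset (s : Finset α) :
    ∑ t ∈ s.powerset, (-1 : ℝ) ^ t.card = if s = ∅ then 1 else 0 := by
  have h := Finset.sum_powerset_neg_one_pow_card (x := s)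
  have h2 : ((∑ m ∈ s.powerset, (-1 : ℤ) ^ m.card : ℤ) : ℝ)
      = ∑ t ∈ s.powerset, (-1 : ℝ) ^ t.card := by push_cast; rfl
  rw [← h2, h]; split <;> norm_num

lemma hlf_pair_swap (s : Finset α) (F : Finset α → Finset α → ℝ) :
    ∑ t ∈ s.powerset, ∑ u ∈ t.powerset, F t u
      = ∑ u ∈ s.powerset, ∑ v ∈ (s \ u).powerset, F (u ∪ v) u := by
  rw [Finset.sum_sigma' s.powerset (fun t => t.powerset) (fun t u => F t u),
      Finset.sum_sigma' s.powerset (fun u => (s \ u).powerset) (fun u v => F (u ∪ v) u)]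
  refine Finset.sum_bij' (fun p _ => ⟨p.2, p.1 \ p.2⟩) (fun p _ => ⟨p.1 ∪ p.2, p.1⟩)
    ?_ ?_ ?_ ?_ ?_
  · rintro ⟨t, u⟩ hp
    obtain ⟨h1, h2⟩ := Finset.mem_sigma.mp hp
    rw [Finset.mem_powerset] at h1 h2
    exact Finset.mem_sigma.mpr ⟨Finset.mem_powerset.mpr (h2.trans h1),
      Finset.mem_powerset.mpr (Finset.sdiff_subset_sdiff h1 le_rfl)⟩
  · rintro ⟨u, v⟩ hp
    obtain ⟨h1, h2⟩ := Finset.mem_sigma.mp hp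
    rw [Finset.mem_powerset] at h1 h2
    exact Finset.mem_sigma.mpr ⟨Finset.mem_powerset.mpr
      (Finset.union_subset h1 (h2.trans Finset.sdiff_subset)),
      Finset.mem_powerset.mpr Finset.subset_union_left⟩
  · rintro ⟨t, u⟩ hp
    obtain ⟨h1, h2⟩ := Finset.mem_sigma.mp hp
    rw [Finset.mem_powerset] at h1 h2
    simp [Finset.union_sdiff_of_subset h2]
  · rintro ⟨u, v⟩ hp
    obtain ⟨h1, h2⟩ := Finset.mem_sigma.mp hp
    rw [Finset.mem_powerset] at h1 h2
    have hd : Disjoint u v := Finset.disjoint_sdiff.mono_right h2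
    simp [Finset.union_sdiff_cancel_left hd]
  · rintro ⟨t, u⟩ hp
    obtain ⟨h1, h2⟩ := Finset.mem_sigma.mp hp
    rw [Finset.mem_powerset] at h1 h2
    simp [Finset.union_sdiff_of_subset h2]

lemma hlf_sign_split {w v : Finset α} (hv : v ⊆ w) :
    (-1 : ℝ) ^ (w \ v).card = (-1) ^ w.card * (-1) ^ v.card := by
  have h1 : (w \ v).card + v.card = w.card := Finset.card_sdiff_add_card_eq_card hv
  have h2 : (-1 : ℝ) ^ v.card * (-1) ^ v.card = 1 := by
    rw [← mul_pow]; norm_num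
  calc (-1 : ℝ) ^ (w \ v).card
      = (-1) ^ (w \ v).card * ((-1) ^ v.card * (-1) ^ v.card) := by rw [h2, mul_one]
    _ = (-1) ^ ((w \ v).card + v.card) * (-1) ^ v.card := by rw [pow_add]; ring
    _ = _ := by rw [h1]

lemma hlf_sign_sum (w : Finset α) :
    ∑ v ∈ w.powerset, (-1 : ℝ) ^ (w \ v).card = if w = ∅ then 1 else 0 := by
  rw [Finset.sum_congr rfl (fun v hv => hlf_sign_split (Finset.mem_powerset.mp hv)),
      ← Finset.mul_sum, hlf_neg_one_pow_sum_powerset]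
  split
  · subst ‹w = ∅›; simp
  · simp

lemma hlf_sdiff_sdiff (s u v : Finset α) : s \ (u ∪ v) = (s \ u) \ v := by
  ext a; simp only [Finset.mem_sdiff, Finset.mem_union]; tauto

lemma hlf_ite_sum (s : Finset α) (g : Finset α → ℝ) :
    ∑ u ∈ s.powerset, (if s \ u = ∅ then (1:ℝ) else 0) * g u = g s := by
  rw [Finset.sum_eq_single_of_mem s (Finset.mem_powerset_self s)]
  · simp
  · intro u hu hne
    rw [Finset.mem_powerset] at hu
    have h : s \ u ≠ ∅ := fun h =>
      hne (Finset.Subset.antisymm hu (Finset.sdiff_eq_empty_iff_subset.mp h))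
    simp [h]

lemma hlf_pair_swap' (s : Finset α) (g : Finset α → Finset α → ℝ) :
    ∑ t ∈ s.powerset, ∑ u ∈ t.powerset, g u (t \ u)
      = ∑ u ∈ s.powerset, ∑ v ∈ (s \ u).powerset, g u v := by
  rw [hlf_pair_swap s (fun t u => g u (t \ u))]
  refine Finset.sum_congr rfl fun u hu => Finset.sum_congr rfl fun v hv => ?_
  rw [Finset.mem_powerset] at hv
  rw [Finset.union_sdiff_cancel_left (Finset.disjoint_sdiff.mono_right hv)]

lemma hlf_kinv_ktr_one (s : Finset α) (g : Finset α → ℝ) :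
    ∑ t ∈ s.powerset, (-1 : ℝ) ^ (s \ t).card * ∑ u ∈ t.powerset, g u = g s := by
  calc ∑ t ∈ s.powerset, (-1 : ℝ) ^ (s \ t).card * ∑ u ∈ t.powerset, g u
      = ∑ t ∈ s.powerset, ∑ u ∈ t.powerset, (-1 : ℝ) ^ (s \ t).card * g u := by
        simp [Finset.mul_sum]
    _ = ∑ u ∈ s.powerset, ∑ v ∈ (s \ u).powerset, (-1 : ℝ) ^ (s \ (u ∪ v)).card * g u :=
        hlf_pair_swap s (fun t u => (-1 : ℝ) ^ (s \ t).card * g u)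
    _ = ∑ u ∈ s.powerset, (if s \ u = ∅ then (1:ℝ) else 0) * g u := by
        refine Finset.sum_congr rfl fun u hu => ?_
        rw [← hlf_sign_sum (s \ u), Finset.sum_mul]
        refine Finset.sum_congr rfl fun v hv => ?_
        rw [hlf_sdiff_sdiff]
    _ = g s := hlf_ite_sum s g

lemma hlf_ktr_kinv_one (s : Finset α) (g : Finset α → ℝ) :
    ∑ t ∈ s.powerset, ∑ u ∈ t.powerset, (-1 : ℝ) ^ (t \ u).card * g u = g s := by
  rw [hlf_pair_swap s (fun t u => (-1 : ℝ) ^ (t \ u).card * g u)]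
  calc ∑ u ∈ s.powerset, ∑ v ∈ (s \ u).powerset, (-1 : ℝ) ^ ((u ∪ v) \ u).card * g u
      = ∑ u ∈ s.powerset, (if s \ u = ∅ then (1:ℝ) else 0) * g u := by
        refine Finset.sum_congr rfl fun u hu => ?_
        rw [← hlf_neg_one_pow_sum_powerset (s \ u), Finset.sum_mul]
        refine Finset.sum_congr rfl fun v hv => ?_
        rw [Finset.mem_powerset] at hv
        rw [Finset.union_sdiff_cancel_left (Finset.disjoint_sdiff.mono_right hv)]
    _ = g s := hlf_ite_sum s g

lemma hlf_kinv_ktr_two (sp sm : Finset α) (g : Finset α → Finset α → ℝ) :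
    ∑ tp ∈ sp.powerset, ∑ tm ∈ sm.powerset,
      (-1 : ℝ) ^ ((sp \ tp).card + (sm \ tm).card) *
        ∑ up ∈ tp.powerset, ∑ um ∈ tm.powerset, g up um = g sp sm := by
  have step : ∀ tp ∈ sp.powerset,
      ∑ tm ∈ sm.powerset, (-1 : ℝ) ^ ((sp \ tp).card + (sm \ tm).card) *
        ∑ up ∈ tp.powerset, ∑ um ∈ tm.powerset, g up um
      = (-1 : ℝ) ^ (sp \ tp).card * ∑ up ∈ tp.powerset, g up sm := by
    intro tp _
    have h : ∀ tm ∈ sm.powerset,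
        (-1 : ℝ) ^ ((sp \ tp).card + (sm \ tm).card) *
          ∑ up ∈ tp.powerset, ∑ um ∈ tm.powerset, g up um
        = (-1 : ℝ) ^ (sp \ tp).card *
            ((-1 : ℝ) ^ (sm \ tm).card * ∑ um ∈ tm.powerset, ∑ up ∈ tp.powerset, g up um) := by
      intro tm _
      rw [Finset.sum_comm, pow_add]; ring
    rw [Finset.sum_congr rfl h, ← Finset.mul_sum,
        hlf_kinv_ktr_one sm (fun um => ∑ up ∈ tp.powerset, g up um)]
  rw [Finset.sum_congr rfl step]
  exact hlf_kinv_ktr_one sp (fun up => g up sm)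

lemma hlf_ktr_kinv_two (sp sm : Finset α) (g : Finset α → Finset α → ℝ) :
    ∑ tp ∈ sp.powerset, ∑ tm ∈ sm.powerset,
      ∑ up ∈ tp.powerset, ∑ um ∈ tm.powerset,
        (-1 : ℝ) ^ ((tp \ up).card + (tm \ um).card) * g up um = g sp sm := by
  have step : ∀ tp ∈ sp.powerset,
      ∑ tm ∈ sm.powerset, ∑ up ∈ tp.powerset, ∑ um ∈ tm.powerset,
        (-1 : ℝ) ^ ((tp \ up).card + (tm \ um).card) * g up um
      = ∑ up ∈ tp.powerset, (-1 : ℝ) ^ (tp \ up).card * g up sm := by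
    intro tp _
    rw [Finset.sum_comm]
    refine Finset.sum_congr rfl fun up _ => ?_
    have h : ∀ tm ∈ sm.powerset,
        ∑ um ∈ tm.powerset, (-1 : ℝ) ^ ((tp \ up).card + (tm \ um).card) * g up um
        = ∑ um ∈ tm.powerset, (-1 : ℝ) ^ (tm \ um).card *
            ((-1 : ℝ) ^ (tp \ up).card * g up um) := by
      intro tm _
      refine Finset.sum_congr rfl fun um _ => ?_
      rw [pow_add]; ring
    rw [Finset.sum_congr rfl h,
        hlf_ktr_kinv_one sm (fun um => (-1 : ℝ) ^ (tp \ up).card * g up um)]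
  rw [Finset.sum_congr rfl step]
  exact hlf_ktr_kinv_one sp (fun up => g up sm)

lemma hlf_quad_swap (sp sm : Finset α)
    (f : Finset α → Finset α → Finset α → Finset α → ℝ) :
    ∑ tp ∈ sp.powerset, ∑ tm ∈ sm.powerset,
      ∑ up ∈ tp.powerset, ∑ um ∈ tm.powerset, f up um (tp \ up) (tm \ um)
    = ∑ up ∈ sp.powerset, ∑ um ∈ sm.powerset,
        ∑ vp ∈ (sp \ up).powerset, ∑ vm ∈ (sm \ um).powerset, f up um vp vm := by
  have step : ∀ tp ∈ sp.powerset,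
      ∑ tm ∈ sm.powerset, ∑ up ∈ tp.powerset, ∑ um ∈ tm.powerset, f up um (tp \ up) (tm \ um)
      = ∑ up ∈ tp.powerset, ∑ um ∈ sm.powerset, ∑ vm ∈ (sm \ um).powerset,
          f up um (tp \ up) vm := by
    intro tp _
    rw [Finset.sum_comm]
    exact Finset.sum_congr rfl fun up _ =>
      hlf_pair_swap' sm (fun um vm => f up um (tp \ up) vm)
  rw [Finset.sum_congr rfl step,
      hlf_pair_swap' sp
        (fun up vp => ∑ um ∈ sm.powerset, ∑ vm ∈ (sm \ um).powerset, f up um vp vm)]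
  refine Finset.sum_congr rfl fun up _ => Finset.sum_comm ..

lemma hlf_sum_powerset_mem (s : Finset α) (f : α → Finset α → ℝ) :
    ∑ t ∈ s.powerset, ∑ x ∈ t, f x t
      = ∑ x ∈ s, ∑ t ∈ (s.erase x).powerset, f x (insert x t) := by
  rw [Finset.sum_sigma' s.powerset (fun t => t) (fun t x => f x t),
      Finset.sum_sigma' s (fun x => (s.erase x).powerset) (fun x t => f x (insert x t))]
  refine Finset.sum_bij' (fun p _ => ⟨p.2, p.1.erase p.2⟩) (fun p _ => ⟨insert p.1 p.2, p.1⟩)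
    ?_ ?_ ?_ ?_ ?_
  · rintro ⟨t, x⟩ hp
    obtain ⟨h1, h2⟩ := Finset.mem_sigma.mp hp
    rw [Finset.mem_powerset] at h1
    exact Finset.mem_sigma.mpr ⟨h1 h2,
      Finset.mem_powerset.mpr (Finset.erase_subset_erase x h1)⟩
  · rintro ⟨x, t⟩ hp
    obtain ⟨h1, h2⟩ := Finset.mem_sigma.mp hp
    rw [Finset.mem_powerset] at h2
    exact Finset.mem_sigma.mpr ⟨Finset.mem_powerset.mpr
      (Finset.insert_subset h1 (h2.trans (Finset.erase_subset x s))),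
      Finset.mem_insert_self x t⟩
  · rintro ⟨t, x⟩ hp
    obtain ⟨h1, h2⟩ := Finset.mem_sigma.mp hp
    simp [Finset.insert_erase h2]
  · rintro ⟨x, t⟩ hp
    obtain ⟨h1, h2⟩ := Finset.mem_sigma.mp hp
    rw [Finset.mem_powerset] at h2
    have hx : x ∉ t := fun h => (Finset.mem_erase.mp (h2 h)).1 rfl
    simp [Finset.erase_insert hx]
  · rintro ⟨t, x⟩ hp
    obtain ⟨h1, h2⟩ := Finset.mem_sigma.mp hp
    simp [Finset.insert_erase h2]

lemma hlf_sdiff_union_erase {σ ξ : Finset α} {x : α} (hξ : ξ ⊆ σ) (hx : x ∈ ξ) :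
    (σ \ ξ) ∪ ξ.erase x = σ.erase x := by
  ext a
  simp only [Finset.mem_union, Finset.mem_sdiff, Finset.mem_erase]
  constructor
  · rintro (⟨h1, h2⟩ | ⟨h1, h2⟩)
    · exact ⟨fun h => h2 (h ▸ hx), h1⟩
    · exact ⟨h1, hξ h2⟩
  · rintro ⟨h1, h2⟩
    by_cases h : a ∈ ξ
    · exact Or.inr ⟨h1, h⟩
    · exact Or.inl ⟨h2, h⟩

lemma hlf_diff_p (G : Finset α → Finset α → ℝ) {σp σm : Finset α} {x : α}
    (hx : x ∈ σp) (hxm : x ∉ σm) :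
    (∑ ξp ∈ (σp.erase x).powerset, ∑ ξm ∈ (insert x σm).powerset, G ξp ξm)
      - ∑ ξp ∈ σp.powerset, ∑ ξm ∈ σm.powerset, G ξp ξm
    = ∑ ξp ∈ (σp.erase x).powerset, ∑ ξm ∈ σm.powerset,
        (G ξp (insert x ξm) - G (insert x ξp) ξm) := by
  have h1 : ∀ ξp, ∑ ξm ∈ (insert x σm).powerset, G ξp ξm
      = ∑ ξm ∈ σm.powerset, G ξp ξm + ∑ ξm ∈ σm.powerset, G ξp (insert x ξm) :=
    fun ξp => Finset.sum_powerset_insert hxm _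
  have h2 : ∑ ξp ∈ σp.powerset, ∑ ξm ∈ σm.powerset, G ξp ξm
      = (∑ ξp ∈ (σp.erase x).powerset, ∑ ξm ∈ σm.powerset, G ξp ξm)
        + ∑ ξp ∈ (σp.erase x).powerset, ∑ ξm ∈ σm.powerset, G (insert x ξp) ξm := by
    conv_lhs => rw [← Finset.insert_erase hx]
    exact Finset.sum_powerset_insert (Finset.notMem_erase x σp) _
  rw [Finset.sum_congr rfl fun ξp _ => h1 ξp, Finset.sum_add_distrib, h2]
  rw [show ∀ a b c : ℝ, a + b - (a + c) = b - c by intros; ring]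
  rw [← Finset.sum_sub_distrib]
  exact Finset.sum_congr rfl fun ξp _ => (Finset.sum_sub_distrib ..).symm

lemma hlf_diff_m (G : Finset α → Finset α → ℝ) {σp σm : Finset α} {y : α}
    (hy : y ∈ σm) (hyp : y ∉ σp) :
    (∑ ξp ∈ (insert y σp).powerset, ∑ ξm ∈ (σm.erase y).powerset, G ξp ξm)
      - ∑ ξp ∈ σp.powerset, ∑ ξm ∈ σm.powerset, G ξp ξm
    = ∑ ξp ∈ σp.powerset, ∑ ξm ∈ (σm.erase y).powerset,
        (G (insert y ξp) ξm - G ξp (insert y ξm)) := by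
  have h1 : ∑ ξp ∈ (insert y σp).powerset, ∑ ξm ∈ (σm.erase y).powerset, G ξp ξm
      = (∑ ξp ∈ σp.powerset, ∑ ξm ∈ (σm.erase y).powerset, G ξp ξm)
        + ∑ ξp ∈ σp.powerset, ∑ ξm ∈ (σm.erase y).powerset, G (insert y ξp) ξm :=
    Finset.sum_powerset_insert hyp _
  have h2 : ∑ ξp ∈ σp.powerset, ∑ ξm ∈ σm.powerset, G ξp ξm
      = ∑ ξp ∈ σp.powerset, (∑ ξm ∈ (σm.erase y).powerset, G ξp ξm
          + ∑ ξm ∈ (σm.erase y).powerset, G ξp (insert y ξm)) := by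
    refine Finset.sum_congr rfl fun ξp _ => ?_
    conv_lhs => rw [← Finset.insert_erase hy]
    exact Finset.sum_powerset_insert (Finset.notMem_erase y σm) _
  rw [h1, h2, Finset.sum_add_distrib]
  rw [show ∀ a b c : ℝ, a + b - (a + c) = b - c by intros; ring]
  rw [← Finset.sum_sub_distrib]
  exact Finset.sum_congr rfl fun ξp _ => (Finset.sum_sub_distrib ..).symm

end HlfAux

lemma hlf_sum_kerK {d : ℕ} (r : (Fin d → ℝ) → Cfg d → Cfg d → ℝ) (x : Fin d → ℝ)
    (ξp ξm ωp ωm : Cfg d) :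
    ∑ ζp ∈ ωp.powerset, ∑ ζm ∈ ωm.powerset, kerK r x ξp ξm ζp ζm
      = r x (ωp ∪ ξp) (ωm ∪ ξm) := by
  unfold kerK
  exact hlf_ktr_kinv_two ωp ωm (fun wp wm => r x (wp ∪ ξp) (wm ∪ ξm))


/-- explicit form of the hierarchical operator `L̂₀ = 𝕂⁻¹ L₀ 𝕂` for
two-component flipping dynamics. -/
theorem hatL_flip {d : ℕ} (ap am : (Fin d → ℝ) → Cfg d → Cfg d → ℝ)
    (G : Cfg d → Cfg d → ℝ) (ηp ηm : Cfg d) (hdisj : Disjoint ηp ηm) :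
    Kinv (Lflip ap am (Ktr G)) ηp ηm =
      (∑ ξp ∈ ηp.powerset, ∑ ξm ∈ ηm.powerset, ∑ x ∈ ξp,
        (G (ξp.erase x) (insert x ξm) - G ξp ξm) *
          kerK ap x (ξp.erase x) ξm (ηp \ ξp) (ηm \ ξm))
      + (∑ ξp ∈ ηp.powerset, ∑ ξm ∈ ηm.powerset, ∑ y ∈ ξm,
        (G (insert y ξp) (ξm.erase y) - G ξp ξm) *
          kerK am y ξp (ξm.erase y) (ηp \ ξp) (ηm \ ξm)) := by
  classical
  -- the explicit kernel function `R`
  set R : Cfg d → Cfg d → ℝ := fun σp σm =>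
    (∑ ξp ∈ σp.powerset, ∑ ξm ∈ σm.powerset, ∑ x ∈ ξp,
      (G (ξp.erase x) (insert x ξm) - G ξp ξm) *
        kerK ap x (ξp.erase x) ξm (σp \ ξp) (σm \ ξm))
    + (∑ ξp ∈ σp.powerset, ∑ ξm ∈ σm.powerset, ∑ y ∈ ξm,
      (G (insert y ξp) (ξm.erase y) - G ξp ξm) *
        kerK am y ξp (ξm.erase y) (σp \ ξp) (σm \ ξm)) with hRdef
  -- Step A : `Ktr R` computed explicitly
  have stepA : ∀ σp σm : Cfg d, Ktr R σp σm =
      (∑ ξp ∈ σp.powerset, ∑ ξm ∈ σm.powerset, ∑ x ∈ ξp,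
        (G (ξp.erase x) (insert x ξm) - G ξp ξm) * ap x (σp.erase x) σm)
      + (∑ ξp ∈ σp.powerset, ∑ ξm ∈ σm.powerset, ∑ y ∈ ξm,
        (G (insert y ξp) (ξm.erase y) - G ξp ξm) * am y σp (σm.erase y)) := by
    intro σp σm
    unfold Ktr
    simp only [hRdef]
    rw [Finset.sum_congr rfl fun τp _ => Finset.sum_add_distrib, Finset.sum_add_distrib]
    congr 1
    · -- positive part
      rw [hlf_quad_swap σp σm (fun ξp ξm ζp ζm => ∑ x ∈ ξp,
        (G (ξp.erase x) (insert x ξm) - G ξp ξm) * kerK ap x (ξp.erase x) ξm ζp ζm)]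
      refine Finset.sum_congr rfl fun ξp hξp => Finset.sum_congr rfl fun ξm hξm => ?_
      rw [Finset.mem_powerset] at hξp hξm
      calc ∑ ζp ∈ (σp \ ξp).powerset, ∑ ζm ∈ (σm \ ξm).powerset, ∑ x ∈ ξp,
            (G (ξp.erase x) (insert x ξm) - G ξp ξm) * kerK ap x (ξp.erase x) ξm ζp ζm
          = ∑ x ∈ ξp, ∑ ζp ∈ (σp \ ξp).powerset, ∑ ζm ∈ (σm \ ξm).powerset,
            (G (ξp.erase x) (insert x ξm) - G ξp ξm) * kerK ap x (ξp.erase x) ξm ζp ζm :=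
            (Finset.sum_congr rfl fun ζp _ => Finset.sum_comm).trans Finset.sum_comm
        _ = ∑ x ∈ ξp, (G (ξp.erase x) (insert x ξm) - G ξp ξm) *
              ∑ ζp ∈ (σp \ ξp).powerset, ∑ ζm ∈ (σm \ ξm).powerset,
                kerK ap x (ξp.erase x) ξm ζp ζm := by
            refine Finset.sum_congr rfl fun x _ => ?_
            rw [Finset.mul_sum]
            refine Finset.sum_congr rfl fun ζp _ => ?_
            rw [Finset.mul_sum]
        _ = ∑ x ∈ ξp, (G (ξp.erase x) (insert x ξm) - G ξp ξm) * ap x (σp.erase x) σm := by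
            refine Finset.sum_congr rfl fun x hx => ?_
            rw [hlf_sum_kerK, hlf_sdiff_union_erase hξp hx,
              Finset.sdiff_union_of_subset hξm]
    · -- negative part
      rw [hlf_quad_swap σp σm (fun ξp ξm ζp ζm => ∑ y ∈ ξm,
        (G (insert y ξp) (ξm.erase y) - G ξp ξm) * kerK am y ξp (ξm.erase y) ζp ζm)]
      refine Finset.sum_congr rfl fun ξp hξp => Finset.sum_congr rfl fun ξm hξm => ?_
      rw [Finset.mem_powerset] at hξp hξm
      calc ∑ ζp ∈ (σp \ ξp).powerset, ∑ ζm ∈ (σm \ ξm).powerset, ∑ y ∈ ξm,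
            (G (insert y ξp) (ξm.erase y) - G ξp ξm) * kerK am y ξp (ξm.erase y) ζp ζm
          = ∑ y ∈ ξm, ∑ ζp ∈ (σp \ ξp).powerset, ∑ ζm ∈ (σm \ ξm).powerset,
            (G (insert y ξp) (ξm.erase y) - G ξp ξm) * kerK am y ξp (ξm.erase y) ζp ζm :=
            (Finset.sum_congr rfl fun ζp _ => Finset.sum_comm).trans Finset.sum_comm
        _ = ∑ y ∈ ξm, (G (insert y ξp) (ξm.erase y) - G ξp ξm) *
              ∑ ζp ∈ (σp \ ξp).powerset, ∑ ζm ∈ (σm \ ξm).powerset,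
                kerK am y ξp (ξm.erase y) ζp ζm := by
            refine Finset.sum_congr rfl fun y _ => ?_
            rw [Finset.mul_sum]
            refine Finset.sum_congr rfl fun ζp _ => ?_
            rw [Finset.mul_sum]
        _ = ∑ y ∈ ξm, (G (insert y ξp) (ξm.erase y) - G ξp ξm) * am y σp (σm.erase y) := by
            refine Finset.sum_congr rfl fun y hy => ?_
            rw [hlf_sum_kerK, Finset.sdiff_union_of_subset hξp,
              hlf_sdiff_union_erase hξm hy]
  -- Step B : `Lflip (Ktr G)` equals the same explicit expression on disjoint pairs
  have stepB : ∀ σp σm : Cfg d, Disjoint σp σm →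
      Lflip ap am (Ktr G) σp σm =
      (∑ ξp ∈ σp.powerset, ∑ ξm ∈ σm.powerset, ∑ x ∈ ξp,
        (G (ξp.erase x) (insert x ξm) - G ξp ξm) * ap x (σp.erase x) σm)
      + (∑ ξp ∈ σp.powerset, ∑ ξm ∈ σm.powerset, ∑ y ∈ ξm,
        (G (insert y ξp) (ξm.erase y) - G ξp ξm) * am y σp (σm.erase y)) := by
    intro σp σm hd
    unfold Lflip
    congr 1
    · -- positive part
      symm
      calc ∑ ξp ∈ σp.powerset, ∑ ξm ∈ σm.powerset, ∑ x ∈ ξp,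
            (G (ξp.erase x) (insert x ξm) - G ξp ξm) * ap x (σp.erase x) σm
          = ∑ ξp ∈ σp.powerset, ∑ x ∈ ξp, ∑ ξm ∈ σm.powerset,
            (G (ξp.erase x) (insert x ξm) - G ξp ξm) * ap x (σp.erase x) σm :=
            Finset.sum_congr rfl fun ξp _ => Finset.sum_comm
        _ = ∑ x ∈ σp, ∑ ξp ∈ (σp.erase x).powerset, ∑ ξm ∈ σm.powerset,
            (G ((insert x ξp).erase x) (insert x ξm) - G (insert x ξp) ξm) *
              ap x (σp.erase x) σm :=
            hlf_sum_powerset_mem σp (fun x ξp => ∑ ξm ∈ σm.powerset,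
              (G (ξp.erase x) (insert x ξm) - G ξp ξm) * ap x (σp.erase x) σm)
        _ = ∑ x ∈ σp, ap x (σp.erase x) σm *
              (Ktr G (σp.erase x) (insert x σm) - Ktr G σp σm) := by
            refine Finset.sum_congr rfl fun x hx => ?_
            have hxm : x ∉ σm := Finset.disjoint_left.mp hd hx
            have e1 : ∀ ξp ∈ (σp.erase x).powerset, ∀ ξm ∈ σm.powerset,
                (G ((insert x ξp).erase x) (insert x ξm) - G (insert x ξp) ξm) *
                  ap x (σp.erase x) σm
                = (G ξp (insert x ξm) - G (insert x ξp) ξm) * ap x (σp.erase x) σm := by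
              intro ξp hξp ξm _
              rw [Finset.mem_powerset] at hξp
              have : x ∉ ξp := fun h => (Finset.mem_erase.mp (hξp h)).1 rfl
              rw [Finset.erase_insert this]
            rw [Finset.sum_congr rfl fun ξp hξp =>
              Finset.sum_congr rfl fun ξm hξm => e1 ξp hξp ξm hξm]
            rw [Finset.sum_congr rfl fun ξp _ => (Finset.sum_mul ..).symm,
              ← Finset.sum_mul, mul_comm (ap x (σp.erase x) σm)]
            unfold Ktr
            rw [hlf_diff_p G hx hxm]
    · -- negative part
      symm
      calc ∑ ξp ∈ σp.powerset, ∑ ξm ∈ σm.powerset, ∑ y ∈ ξm,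
            (G (insert y ξp) (ξm.erase y) - G ξp ξm) * am y σp (σm.erase y)
          = ∑ ξm ∈ σm.powerset, ∑ y ∈ ξm, ∑ ξp ∈ σp.powerset,
            (G (insert y ξp) (ξm.erase y) - G ξp ξm) * am y σp (σm.erase y) :=
            Finset.sum_comm.trans (Finset.sum_congr rfl fun ξm _ => Finset.sum_comm)
        _ = ∑ y ∈ σm, ∑ ξm ∈ (σm.erase y).powerset, ∑ ξp ∈ σp.powerset,
            (G (insert y ξp) ((insert y ξm).erase y) - G ξp (insert y ξm)) *
              am y σp (σm.erase y) :=
            hlf_sum_powerset_mem σm (fun y ξm => ∑ ξp ∈ σp.powerset,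
              (G (insert y ξp) (ξm.erase y) - G ξp ξm) * am y σp (σm.erase y))
        _ = ∑ y ∈ σm, am y σp (σm.erase y) *
              (Ktr G (insert y σp) (σm.erase y) - Ktr G σp σm) := by
            refine Finset.sum_congr rfl fun y hy => ?_
            have hyp : y ∉ σp := Finset.disjoint_right.mp hd hy
            have e1 : ∀ ξm ∈ (σm.erase y).powerset, ∀ ξp ∈ σp.powerset,
                (G (insert y ξp) ((insert y ξm).erase y) - G ξp (insert y ξm)) *
                  am y σp (σm.erase y)
                = (G (insert y ξp) ξm - G ξp (insert y ξm)) * am y σp (σm.erase y) := by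
              intro ξm hξm ξp _
              rw [Finset.mem_powerset] at hξm
              have : y ∉ ξm := fun h => (Finset.mem_erase.mp (hξm h)).1 rfl
              rw [Finset.erase_insert this]
            rw [Finset.sum_congr rfl fun ξm hξm =>
              Finset.sum_congr rfl fun ξp hξp => e1 ξm hξm ξp hξp]
            rw [Finset.sum_comm]
            rw [Finset.sum_congr rfl fun ξp _ => (Finset.sum_mul ..).symm,
              ← Finset.sum_mul, mul_comm (am y σp (σm.erase y))]
            unfold Ktr
            rw [hlf_diff_m G hy hyp]
  -- assemble
  have key : Kinv (Lflip ap am (Ktr G)) ηp ηm = Kinv (Ktr R) ηp ηm := by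
    unfold Kinv
    refine Finset.sum_congr rfl fun ξp hp => Finset.sum_congr rfl fun ξm hm => ?_
    rw [Finset.mem_powerset] at hp hm
    rw [stepB ξp ξm (hdisj.mono hp hm), stepA]
  rw [key]
  have final : Kinv (Ktr R) ηp ηm = R ηp ηm := by
    unfold Kinv Ktr
    exact hlf_kinv_ktr_two ηp ηm R
  rw [final]
end
end
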